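/- Let B be a positive-definite symmetric bilinear form on ℝ², Z a point, c < 0, and q(X) := B(X − Z, X − Z) + c. Let D be a point with D ≠ Z. If q(D) < 0 (D interior to the ellipse), then there exist exactly two points X with q(X) = 0 and q(2D − X) = 0; i.e., there is a unique unordered pair {B₁, C₁} of distinct points on the conic q = 0 whose midpoint is D. If q(D) > 0 (D exterior), then no point X satisfies q(X) = 0 and q(2D − X) = 0. -/

import Mathlib

/-- Chords of an ellipse with a prescribed midpoint `D ≠ Z`: if `D` is interior
(`q(D) < 0`) there are exactly two points `X` with `q(X) = 0` and `q(2D − X) = 0`,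
i.e. a unique unordered pair of distinct points of the conic with midpoint `D`;
if `D` is exterior (`q(D) > 0`) there is none. -/
theorem ellipse_chord_with_given_midpoint
    (B : (ℝ × ℝ) →ₗ[ℝ] (ℝ × ℝ) →ₗ[ℝ] ℝ)
    (hBsymm : ∀ u v, B u v = B v u)
    (hBpos : ∀ w : ℝ × ℝ, w ≠ 0 → 0 < B w w)
    (Z : ℝ × ℝ) (c : ℝ) (hc : c < 0)
    (D : ℝ × ℝ) (hD : D ≠ Z) :
    (B (D - Z) (D - Z) + c < 0 →
      ∃ B₁ C₁ : ℝ × ℝ, B₁ ≠ C₁ ∧ midpoint ℝ B₁ C₁ = D ∧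
        {X : ℝ × ℝ | B (X - Z) (X - Z) + c = 0 ∧
            B ((2 : ℝ) • D - X - Z) ((2 : ℝ) • D - X - Z) + c = 0} =
          {B₁, C₁}) ∧
    (0 < B (D - Z) (D - Z) + c →
      ¬ ∃ X : ℝ × ℝ, B (X - Z) (X - Z) + c = 0 ∧
        B ((2 : ℝ) • D - X - Z) ((2 : ℝ) • D - X - Z) + c = 0) := by
  set d : ℝ × ℝ := D - Z with hd_def
  have hd : d ≠ 0 := sub_ne_zero.mpr hD
  -- representation lemma
  have hrep : ∀ u v : ℝ × ℝ, B u v = v.1 * B u (1,0) + v.2 * B u (0,1) := by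
    intro u v
    have hv : B u v = B u (v.1 • ((1:ℝ),(0:ℝ)) + v.2 • ((0:ℝ),(1:ℝ))) := by
      congr 1; ext <;> simp
    rw [hv, map_add, map_smul, map_smul, smul_eq_mul, smul_eq_mul]
  -- expansion lemma
  have hexp : ∀ v : ℝ × ℝ, ∀ ε : ℝ, B (d + ε • v) (d + ε • v)
      = B d d + 2 * ε * B d v + ε^2 * B v v := by
    intro v ε
    simp only [map_add, map_smul, LinearMap.add_apply, LinearMap.smul_apply, smul_eq_mul]
    rw [hBsymm v d]; ring
  -- key geometric reformulation of membership
  have hmem : ∀ X : ℝ × ℝ,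
      (B (X - Z) (X - Z) + c = 0 ∧
        B ((2 : ℝ) • D - X - Z) ((2 : ℝ) • D - X - Z) + c = 0) ↔
      (B d (X - D) = 0 ∧ B (X - D) (X - D) = -(B d d + c)) := by
    intro X
    have h1 : X - Z = d + (1:ℝ) • (X - D) := by rw [hd_def]; module
    have h2 : (2 : ℝ) • D - X - Z = d + (-1:ℝ) • (X - D) := by rw [hd_def]; module
    rw [h1, h2, hexp, hexp]
    constructor
    · rintro ⟨e1, e2⟩
      constructor <;> nlinarith [e1, e2]
    · rintro ⟨e1, e2⟩
      constructor <;> nlinarith [e1, e2]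
  constructor
  · -- interior case
    intro hint
    set t : ℝ := -(B d d + c) with ht_def
    have ht : 0 < t := by simp [ht_def]; linarith
    -- construct w with B d w = 0
    set a : ℝ := B d (1,0) with ha_def
    set b : ℝ := B d (0,1) with hb_def
    set w : ℝ × ℝ := (b, -a) with hw_def
    have hdw : B d w = 0 := by rw [hrep d w]; simp [hw_def]; ring
    have hw : w ≠ 0 := by
      intro h
      have hb0 : b = 0 := congrArg Prod.fst h
      have ha0 : a = 0 := by have := congrArg Prod.snd h; simpa [hw_def] using this
      have : B d d = 0 := by rw [hrep d d, ← ha_def, ← hb_def, ha0, hb0]; ring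
      exact absurd this (ne_of_gt (hBpos d hd))
    have hww : 0 < B w w := hBpos w hw
    set s : ℝ := Real.sqrt (t / B w w) with hs_def
    have hs : 0 < s := Real.sqrt_pos.mpr (div_pos ht hww)
    have hs2 : s ^ 2 * B w w = t := by
      rw [hs_def, sq, Real.mul_self_sqrt (le_of_lt (div_pos ht hww))]
      field_simp
    -- span lemma: B d v = 0 → v = k • w
    have hspan : ∀ v : ℝ × ℝ, B d v = 0 → ∃ k : ℝ, v = k • w := by
      intro v hv
      rw [hrep d v, ← ha_def, ← hb_def] at hv
      by_cases hb0 : b = 0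
      · have ha0 : a ≠ 0 := by
          intro h
          apply hw; rw [hw_def, hb0, h]; simp
        refine ⟨-v.2 / a, ?_⟩
        have hv1 : v.1 = 0 := by
          have : v.1 * a = 0 := by rw [hb0] at hv; linarith
          rcases mul_eq_zero.mp this with h | h
          · exact h
          · exact absurd h ha0
        ext <;> simp [hw_def, hb0, hv1] <;> field_simp
      · refine ⟨v.1 / b, ?_⟩
        have hv2 : v.2 = -(v.1 * a) / b := by field_simp; linarith
        ext <;> simp [hw_def, hv2] <;> field_simp <;> ring
    refine ⟨D + s • w, D - s • w, ?_, ?_, ?_⟩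
    · intro h
      have : s • w = 0 := by
        have h2 : (2:ℝ) • (s • w) = 0 := by
          have := sub_eq_zero.mpr h
          rw [two_smul]
          linear_combination (norm := module) this
        have := smul_eq_zero.mp h2
        rcases this with h | h
        · norm_num at h
        · exact h
      rcases smul_eq_zero.mp this with h | h
      · exact absurd h (ne_of_gt hs)
      · exact hw h
    · rw [midpoint_eq_smul_add, invOf_eq_inv]; module
    · ext X
      simp only [Set.mem_setOf_eq, Set.mem_insert_iff, Set.mem_singleton_iff]
      rw [hmem X]
      constructor
      · rintro ⟨h1, h2⟩
        obtain ⟨k, hk⟩ := hspan (X - D) h1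
        have hk2 : k ^ 2 * B w w = t := by
          rw [hk] at h2
          simp only [map_smul, LinearMap.smul_apply, smul_eq_mul] at h2
          nlinarith [h2]
        have : k ^ 2 = s ^ 2 := by
          have := hs2
          field_simp at hk2 this ⊢
          nlinarith [hk2, hs2]
        have hks : k = s ∨ k = -s := sq_eq_sq_iff_eq_or_eq_neg.mp this |>.imp id id
        rcases hks with h | h
        · left; have : X - D = s • w := by rw [hk, h]
          linear_combination (norm := module) this
        · right; have : X - D = -(s • w) := by rw [hk, h, neg_smul]
          linear_combination (norm := module) this
      · rintro (h | h) <;> subst h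
        · have hXD : D + s • w - D = s • w := by module
          rw [hXD]
          constructor
          · simp [hdw]
          · simp only [map_smul, LinearMap.smul_apply, smul_eq_mul]
            nlinarith [hs2]
        · have hXD : D - s • w - D = -(s • w) := by module
          rw [hXD]
          constructor
          · simp [hdw]
          · simp only [map_neg, map_smul, LinearMap.neg_apply, LinearMap.smul_apply,
              smul_eq_mul, neg_neg]
            nlinarith [hs2]
  · -- exterior case
    intro hext ⟨X, hX⟩
    rw [hmem X] at hX
    obtain ⟨h1, h2⟩ := hX
    have hnn : 0 ≤ B (X - D) (X - D) := by
      by_cases h : X - D = 0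
      · rw [h]; simp
      · exact le_of_lt (hBpos _ h)
    linarith [h2, hnn, hext]
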